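/- arXiv:2001.11860 — 5 statements merged into one kernel-verified Lean document; each statement's English description precedes it below -/
import Mathlib

section
/- Let B be an n×n real symmetric positive definite matrix, R an m×m real symmetric positive definite matrix, and H an m×n real matrix. Define the Kalman gain K = B Hᵀ (H B Hᵀ + R)⁻¹ and the 3D-Var cost function J(x) = ½ (x − x_b)ᵀ B⁻¹ (x − x_b) + ½ (y − H x)ᵀ R⁻¹ (y − H x) for fixed vectors x_b ∈ ℝⁿ and y ∈ ℝᵐ. Then x_a = x_b + K (y − H x_b) is the unique global minimizer of J, i.e., J(x_a) ≤ J(x) for all x ∈ ℝⁿ, with equality only when x = x_a. -/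
open Matrix

private lemma dot_symm {n : ℕ} {M : Matrix (Fin n) (Fin n) ℝ} (hM : Mᵀ = M)
    (v w : Fin n → ℝ) : v ⬝ᵥ M *ᵥ w = w ⬝ᵥ M *ᵥ v := by
  rw [dotProduct_mulVec, ← mulVec_transpose, hM, dotProduct_comm]

private lemma dot_adj {m n : ℕ} (H : Matrix (Fin m) (Fin n) ℝ) (d : Fin n → ℝ)
    (w : Fin m → ℝ) : (H *ᵥ d) ⬝ᵥ w = d ⬝ᵥ Hᵀ *ᵥ w := by
  rw [dotProduct_mulVec, vecMul_transpose]

private lemma symm_of_posdef {n : ℕ} {M : Matrix (Fin n) (Fin n) ℝ} (hM : M.PosDef) :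
    Mᵀ = M := by
  have := hM.isHermitian
  rwa [Matrix.IsHermitian, conjTranspose_eq_transpose_of_trivial] at this

/-- The analysis `x_a = x_b + K (y - H x_b)` with Kalman gain
`K = B Hᵀ (H B Hᵀ + R)⁻¹` is the unique global minimizer of the 3D-Var cost
function `J`. -/
theorem kalman_analysis_unique_minimizer {n m : ℕ}
    (B : Matrix (Fin n) (Fin n) ℝ) (R : Matrix (Fin m) (Fin m) ℝ)
    (H : Matrix (Fin m) (Fin n) ℝ)
    (hB : B.PosDef) (hR : R.PosDef)
    (xb : Fin n → ℝ) (y : Fin m → ℝ)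
    (K : Matrix (Fin n) (Fin m) ℝ)
    (hK : K = B * Hᵀ * (H * B * Hᵀ + R)⁻¹)
    (J : (Fin n → ℝ) → ℝ)
    (hJ : ∀ x, J x = (1 / 2 : ℝ) * ((x - xb) ⬝ᵥ B⁻¹ *ᵥ (x - xb))
        + (1 / 2 : ℝ) * ((y - H *ᵥ x) ⬝ᵥ R⁻¹ *ᵥ (y - H *ᵥ x)))
    (xa : Fin n → ℝ) (hxa : xa = xb + K *ᵥ (y - H *ᵥ xb)) :
    ∀ x : Fin n → ℝ, J xa ≤ J x ∧ (J x = J xa → x = xa) := by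
  have hS : (H * B * Hᵀ + R).PosDef := by
    have h1 := hB.posSemidef.mul_mul_conjTranspose_same H
    rw [conjTranspose_eq_transpose_of_trivial] at h1
    exact Matrix.PosDef.posSemidef_add h1 hR
  have hBdet : IsUnit B.det := hB.det_pos.ne'.isUnit
  have hRdet : IsUnit R.det := hR.det_pos.ne'.isUnit
  have hSdet : IsUnit (H * B * Hᵀ + R).det := hS.det_pos.ne'.isUnit
  have hBB : B⁻¹ * B = 1 := nonsing_inv_mul B hBdet
  have hRR : Hᵀ * R⁻¹ * R = Hᵀ := by
    rw [Matrix.mul_assoc, nonsing_inv_mul R hRdet, Matrix.mul_one]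
  have hSS : (H * B * Hᵀ + R) * (H * B * Hᵀ + R)⁻¹ = 1 := mul_nonsing_inv _ hSdet
  have h1 : (B⁻¹ + Hᵀ * R⁻¹ * H) * (B * Hᵀ) = Hᵀ * R⁻¹ * (H * B * Hᵀ + R) := by
    have hb : B⁻¹ * (B * Hᵀ) = Hᵀ := by rw [← Matrix.mul_assoc, hBB, Matrix.one_mul]
    rw [Matrix.add_mul, Matrix.mul_add, hb, hRR]
    rw [Matrix.mul_assoc (Hᵀ * R⁻¹) H (B * Hᵀ), ← Matrix.mul_assoc H B Hᵀ]
    exact add_comm _ _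
  have hmat : (B⁻¹ + Hᵀ * R⁻¹ * H) * K = Hᵀ * R⁻¹ := by
    rw [hK, ← Matrix.mul_assoc, h1, Matrix.mul_assoc, hSS, Matrix.mul_one]
  -- the shifted vector
  set v : Fin m → ℝ := y - H *ᵥ xb with hv
  have he : xa - xb = K *ᵥ v := by rw [hxa]; abel
  have hcross : B⁻¹ *ᵥ (K *ᵥ v) = Hᵀ *ᵥ (R⁻¹ *ᵥ (v - H *ᵥ (K *ᵥ v))) := by
    have h : (B⁻¹ + Hᵀ * R⁻¹ * H) *ᵥ (K *ᵥ v) = (Hᵀ * R⁻¹) *ᵥ v := by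
      rw [mulVec_mulVec, hmat]
    rw [Matrix.add_mulVec] at h
    simp only [Matrix.mulVec_sub, Matrix.mulVec_mulVec, Matrix.mul_assoc] at h ⊢
    exact eq_sub_of_add_eq h
  have hBsym : (B⁻¹)ᵀ = B⁻¹ := symm_of_posdef hB.inv
  have hRsym : (R⁻¹)ᵀ = R⁻¹ := symm_of_posdef hR.inv
  -- decomposition of J
  have hdecomp : ∀ x : Fin n → ℝ, J x = J xa
      + (1 / 2 : ℝ) * ((x - xa) ⬝ᵥ B⁻¹ *ᵥ (x - xa))
      + (1 / 2 : ℝ) * ((H *ᵥ (x - xa)) ⬝ᵥ R⁻¹ *ᵥ (H *ᵥ (x - xa))) := by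
    intro x
    have hr : y - H *ᵥ xa = v - H *ᵥ (K *ᵥ v) := by
      rw [hxa, Matrix.mulVec_add, hv]; abel
    have hkey : (x - xa) ⬝ᵥ B⁻¹ *ᵥ (xa - xb)
        = (H *ᵥ (x - xa)) ⬝ᵥ R⁻¹ *ᵥ (y - H *ᵥ xa) := by
      rw [he, dot_adj H (x - xa) (R⁻¹ *ᵥ (y - H *ᵥ xa)), hr, ← hcross]
    have s1 : xa ⬝ᵥ B⁻¹ *ᵥ x = x ⬝ᵥ B⁻¹ *ᵥ xa := dot_symm hBsym xa x
    have s2 : xb ⬝ᵥ B⁻¹ *ᵥ x = x ⬝ᵥ B⁻¹ *ᵥ xb := dot_symm hBsym xb x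
    have s3 : xb ⬝ᵥ B⁻¹ *ᵥ xa = xa ⬝ᵥ B⁻¹ *ᵥ xb := dot_symm hBsym xb xa
    have t1 : (H *ᵥ xa) ⬝ᵥ R⁻¹ *ᵥ y = y ⬝ᵥ R⁻¹ *ᵥ (H *ᵥ xa) := dot_symm hRsym _ _
    have t2 : (H *ᵥ x) ⬝ᵥ R⁻¹ *ᵥ y = y ⬝ᵥ R⁻¹ *ᵥ (H *ᵥ x) := dot_symm hRsym _ _
    have t3 : (H *ᵥ xa) ⬝ᵥ R⁻¹ *ᵥ (H *ᵥ x) = (H *ᵥ x) ⬝ᵥ R⁻¹ *ᵥ (H *ᵥ xa) :=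
      dot_symm hRsym _ _
    rw [hJ x, hJ xa]
    simp only [Matrix.mulVec_sub, dotProduct_sub, sub_dotProduct] at hkey ⊢
    linarith [hkey, s1, s2, s3, t1, t2, t3]
  intro x
  have hd := hdecomp x
  have hq1 : 0 ≤ (x - xa) ⬝ᵥ B⁻¹ *ᵥ (x - xa) := by
    simpa using hB.inv.posSemidef.dotProduct_mulVec_nonneg (x - xa)
  have hq2 : 0 ≤ (H *ᵥ (x - xa)) ⬝ᵥ R⁻¹ *ᵥ (H *ᵥ (x - xa)) := by
    simpa using hR.inv.posSemidef.dotProduct_mulVec_nonneg (H *ᵥ (x - xa))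
  constructor
  · rw [hd]; linarith
  · intro hEq
    by_contra hne
    have hd0 : x - xa ≠ 0 := sub_ne_zero.mpr hne
    have hp : 0 < (x - xa) ⬝ᵥ B⁻¹ *ᵥ (x - xa) := by
      simpa using hB.inv.dotProduct_mulVec_pos hd0
    rw [hd] at hEq
    linarith
end

section
/- Let B be an n×n real symmetric positive definite matrix, R an m×m real symmetric positive definite matrix, H an m×n real matrix, and K = B Hᵀ (H B Hᵀ + R)⁻¹ the Kalman gain. Let (Ω, 𝔽, ℙ) be a probability space and ε_b : Ω → ℝⁿ, ε_y : Ω → ℝᵐ random vectors such that all products among their components are integrable, each component has mean zero, ∫ (ε_b)_i (ε_b)_j dℙ = B_{ij}, ∫ (ε_y)_k (ε_y)_l dℙ = R_{kl}, and ∫ (ε_b)_i (ε_y)_k dℙ = 0. With x_b = x_t + ε_b, y = H x_t − ε_y, and analysis x_a = x_b + K(y − H x_b), the expected background part of the cost satisfies ∫ (x_a − x_b)ᵀ B⁻¹ (x_a − x_b) dℙ = Tr(K H), i.e., E[2 J_b(x_a)] = Tr(K H). -/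
open Matrix MeasureTheory

/-- Desroziers–Ivanov background diagnosis: with optimal Kalman gain `K`,
`E[(x_a - x_b)ᵀ B⁻¹ (x_a - x_b)] = Tr(K H)`, i.e. `E[2 J_b(x_a)] = Tr(K H)`. -/
theorem expected_background_cost_eq_trace_KH {n m : ℕ} {Ω : Type*}
    [MeasurableSpace Ω] (ℙ : Measure Ω) [IsProbabilityMeasure ℙ]
    (B : Matrix (Fin n) (Fin n) ℝ) (R : Matrix (Fin m) (Fin m) ℝ)
    (H : Matrix (Fin m) (Fin n) ℝ)
    (hB : B.PosDef) (hR : R.PosDef)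
    (K : Matrix (Fin n) (Fin m) ℝ)
    (hK : K = B * Hᵀ * (H * B * Hᵀ + R)⁻¹)
    (xt : Fin n → ℝ)
    (εb : Ω → (Fin n → ℝ)) (εy : Ω → (Fin m → ℝ))
    (hbb : ∀ i j, Integrable (fun ω => εb ω i * εb ω j) ℙ)
    (hyy : ∀ k l, Integrable (fun ω => εy ω k * εy ω l) ℙ)
    (hby : ∀ i k, Integrable (fun ω => εb ω i * εy ω k) ℙ)
    (hmb : ∀ i, ∫ ω, εb ω i ∂ℙ = 0)
    (hmy : ∀ k, ∫ ω, εy ω k ∂ℙ = 0)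
    (hBcov : ∀ i j, ∫ ω, εb ω i * εb ω j ∂ℙ = B i j)
    (hRcov : ∀ k l, ∫ ω, εy ω k * εy ω l ∂ℙ = R k l)
    (hcross : ∀ i k, ∫ ω, εb ω i * εy ω k ∂ℙ = 0)
    (xb : Ω → (Fin n → ℝ)) (hxb : ∀ ω, xb ω = xt + εb ω)
    (y : Ω → (Fin m → ℝ)) (hy : ∀ ω, y ω = H *ᵥ xt - εy ω)
    (xa : Ω → (Fin n → ℝ))
    (hxa : ∀ ω, xa ω = xb ω + K *ᵥ (y ω - H *ᵥ xb ω)) :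
    ∫ ω, (xa ω - xb ω) ⬝ᵥ B⁻¹ *ᵥ (xa ω - xb ω) ∂ℙ = (K * H).trace := by
  classical
  set S : Matrix (Fin m) (Fin m) ℝ := H * B * Hᵀ + R with hSdef
  have hHBHt : (H * B * Hᵀ).PosSemidef := by
    have := hB.posSemidef.mul_mul_conjTranspose_same H
    simpa [conjTranspose_eq_transpose_of_trivial] using this
  have hSpd : S.PosDef := by
    rw [hSdef, add_comm]
    exact hR.add_posSemidef hHBHt
  have hBsymm : Bᵀ = B := by
    have := hB.isHermitian
    rwa [IsHermitian, conjTranspose_eq_transpose_of_trivial] at this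
  have hSsymm : Sᵀ = S := by
    have := hSpd.isHermitian
    rwa [IsHermitian, conjTranspose_eq_transpose_of_trivial] at this
  have hSinvsymm : (S⁻¹)ᵀ = S⁻¹ := by
    rw [transpose_nonsing_inv, hSsymm]
  -- the innovation error vector
  set e : Ω → (Fin m → ℝ) := fun ω => εy ω + H *ᵥ εb ω with he
  have hdiff : ∀ ω, xa ω - xb ω = -(K *ᵥ e ω) := by
    intro ω
    have harg : y ω - H *ᵥ xb ω = -(e ω) := by
      rw [hy, hxb, mulVec_add]
      simp only [he]
      abel
    rw [hxa, harg, mulVec_neg]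
    abel
  set M : Matrix (Fin m) (Fin m) ℝ := Kᵀ * B⁻¹ * K with hM
  have aux : ∀ v : Fin m → ℝ, v ⬝ᵥ M *ᵥ v = (K *ᵥ v) ⬝ᵥ B⁻¹ *ᵥ (K *ᵥ v) := by
    intro v
    rw [hM, Matrix.mul_assoc, ← Matrix.mulVec_mulVec, dotProduct_mulVec v,
      vecMul_transpose, ← Matrix.mulVec_mulVec]
  have hquad : ∀ ω, (xa ω - xb ω) ⬝ᵥ B⁻¹ *ᵥ (xa ω - xb ω) = e ω ⬝ᵥ M *ᵥ e ω := by
    intro ω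
    rw [hdiff ω, neg_dotProduct, mulVec_neg, dotProduct_neg, neg_neg, aux]
  -- second moments of e
  have hby' : ∀ k q, Integrable (fun ω => εy ω k * εb ω q) ℙ := by
    intro k q
    simpa [mul_comm] using hby q k
  have hexp : ∀ ω (k l : Fin m), e ω k * e ω l =
      εy ω k * εy ω l
      + (∑ q, H l q * (εy ω k * εb ω q))
      + (∑ p, H k p * (εb ω p * εy ω l))
      + (∑ p, ∑ q, (H k p * H l q) * (εb ω p * εb ω q)) := by
    intro ω k l
    have h2 : εy ω k * (∑ q, H l q * εb ω q) = ∑ q, H l q * (εy ω k * εb ω q) := by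
      rw [Finset.mul_sum]; exact Finset.sum_congr rfl fun q _ => by ring
    have h3 : (∑ p, H k p * εb ω p) * εy ω l = ∑ p, H k p * (εb ω p * εy ω l) := by
      rw [Finset.sum_mul]; exact Finset.sum_congr rfl fun p _ => by ring
    have h4 : (∑ p, H k p * εb ω p) * (∑ q, H l q * εb ω q)
        = ∑ p, ∑ q, (H k p * H l q) * (εb ω p * εb ω q) := by
      rw [Finset.sum_mul]
      refine Finset.sum_congr rfl fun p _ => ?_
      rw [Finset.mul_sum]
      exact Finset.sum_congr rfl fun q _ => by ring
    have : e ω k * e ω l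
        = εy ω k * εy ω l + εy ω k * (∑ q, H l q * εb ω q)
          + (∑ p, H k p * εb ω p) * εy ω l
          + (∑ p, H k p * εb ω p) * (∑ q, H l q * εb ω q) := by
      simp only [he, Pi.add_apply, mulVec, dotProduct]
      ring
    rw [this, h2, h3, h4]
  have heint : ∀ k l, Integrable (fun ω => e ω k * e ω l) ℙ := by
    intro k l
    have h1 := hyy k l
    have h2 : Integrable (fun ω => ∑ q, H l q * (εy ω k * εb ω q)) ℙ :=
      integrable_finset_sum _ fun q _ => (hby' k q).const_mul _
    have h3 : Integrable (fun ω => ∑ p, H k p * (εb ω p * εy ω l)) ℙ :=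
      integrable_finset_sum _ fun p _ => (hby p l).const_mul _
    have h4 : Integrable (fun ω => ∑ p, ∑ q, (H k p * H l q) * (εb ω p * εb ω q)) ℙ :=
      integrable_finset_sum _ fun p _ =>
        integrable_finset_sum _ fun q _ => (hbb p q).const_mul _
    have := ((h1.add h2).add h3).add h4
    exact this.congr (Filter.Eventually.of_forall fun ω => (hexp ω k l).symm)
  have hecov : ∀ k l, ∫ ω, e ω k * e ω l ∂ℙ = S k l := by
    intro k l
    have h1 := hyy k l
    have h2 : Integrable (fun ω => ∑ q, H l q * (εy ω k * εb ω q)) ℙ :=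
      integrable_finset_sum _ fun q _ => (hby' k q).const_mul _
    have h3 : Integrable (fun ω => ∑ p, H k p * (εb ω p * εy ω l)) ℙ :=
      integrable_finset_sum _ fun p _ => (hby p l).const_mul _
    have h4 : Integrable (fun ω => ∑ p, ∑ q, (H k p * H l q) * (εb ω p * εb ω q)) ℙ :=
      integrable_finset_sum _ fun p _ =>
        integrable_finset_sum _ fun q _ => (hbb p q).const_mul _
    calc ∫ ω, e ω k * e ω l ∂ℙ
        = ∫ ω, (εy ω k * εy ω l
          + (∑ q, H l q * (εy ω k * εb ω q))
          + (∑ p, H k p * (εb ω p * εy ω l))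
          + (∑ p, ∑ q, (H k p * H l q) * (εb ω p * εb ω q))) ∂ℙ := by
          exact integral_congr_ae (Filter.Eventually.of_forall fun ω => hexp ω k l)
      _ = (∫ ω, εy ω k * εy ω l ∂ℙ)
          + (∫ ω, ∑ q, H l q * (εy ω k * εb ω q) ∂ℙ)
          + (∫ ω, ∑ p, H k p * (εb ω p * εy ω l) ∂ℙ)
          + (∫ ω, ∑ p, ∑ q, (H k p * H l q) * (εb ω p * εb ω q) ∂ℙ) := by
          have h12 : Integrable (fun ω => εy ω k * εy ω l
              + ∑ q, H l q * (εy ω k * εb ω q)) ℙ := h1.add h2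
          have h123 : Integrable (fun ω => εy ω k * εy ω l
              + (∑ q, H l q * (εy ω k * εb ω q))
              + ∑ p, H k p * (εb ω p * εy ω l)) ℙ := h12.add h3
          rw [integral_add h123 h4, integral_add h12 h3, integral_add h1 h2]
      _ = S k l := by
          rw [hRcov k l]
          have e2 : (∫ ω, ∑ q, H l q * (εy ω k * εb ω q) ∂ℙ) = 0 := by
            rw [integral_finset_sum _ fun q _ => (hby' k q).const_mul _]
            refine Finset.sum_eq_zero fun q _ => ?_
            rw [integral_const_mul _ _]
            have : ∫ ω, εy ω k * εb ω q ∂ℙ = 0 := by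
              rw [show (fun ω => εy ω k * εb ω q) = fun ω => εb ω q * εy ω k from
                funext fun ω => mul_comm _ _]
              exact hcross q k
            rw [this, mul_zero]
          have e3 : (∫ ω, ∑ p, H k p * (εb ω p * εy ω l) ∂ℙ) = 0 := by
            rw [integral_finset_sum _ fun p _ => (hby p l).const_mul _]
            refine Finset.sum_eq_zero fun p _ => ?_
            rw [integral_const_mul _ _, hcross p l, mul_zero]
          have e4 : (∫ ω, ∑ p, ∑ q, (H k p * H l q) * (εb ω p * εb ω q) ∂ℙ)
              = (H * B * Hᵀ) k l := by
            rw [integral_finset_sum _ fun p _ =>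
              integrable_finset_sum _ fun q _ => (hbb p q).const_mul _]
            have : ∀ p, (∫ ω, ∑ q, (H k p * H l q) * (εb ω p * εb ω q) ∂ℙ)
                = ∑ q, (H k p * H l q) * B p q := by
              intro p
              rw [integral_finset_sum _ fun q _ => (hbb p q).const_mul _]
              exact Finset.sum_congr rfl fun q _ => by rw [integral_const_mul _ _, hBcov]
            rw [Finset.sum_congr rfl fun p _ => this p]
            simp only [Matrix.mul_apply, transpose_apply, Finset.sum_mul]
            rw [Finset.sum_comm]
            exact Finset.sum_congr rfl fun p _ => Finset.sum_congr rfl fun q _ => by ring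
          rw [e2, e3, e4, hSdef]
          simp [Matrix.add_apply]
          ring
  -- compute the integral of the quadratic form
  have hpt : ∀ ω, e ω ⬝ᵥ M *ᵥ e ω = ∑ k, ∑ l, M k l * (e ω k * e ω l) := by
    intro ω
    simp only [dotProduct, mulVec]
    exact Finset.sum_congr rfl fun k _ => by
      rw [Finset.mul_sum]
      exact Finset.sum_congr rfl fun l _ => by ring
  have hint : ∫ ω, (xa ω - xb ω) ⬝ᵥ B⁻¹ *ᵥ (xa ω - xb ω) ∂ℙ
      = ∑ k, ∑ l, M k l * S k l := by
    calc ∫ ω, (xa ω - xb ω) ⬝ᵥ B⁻¹ *ᵥ (xa ω - xb ω) ∂ℙ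
        = ∫ ω, ∑ k, ∑ l, M k l * (e ω k * e ω l) ∂ℙ := by
          exact integral_congr_ae (Filter.Eventually.of_forall fun ω =>
            (hquad ω).trans (hpt ω))
      _ = ∑ k, ∑ l, M k l * S k l := by
          rw [integral_finset_sum _ fun k _ =>
            (integrable_finset_sum _ fun l _ => (heint k l).const_mul (M k l) :
              Integrable (fun ω => ∑ l, M k l * (e ω k * e ω l)) ℙ)]
          refine Finset.sum_congr rfl fun k _ => ?_
          rw [integral_finset_sum _ fun l _ => (heint k l).const_mul _]
          exact Finset.sum_congr rfl fun l _ => by rw [integral_const_mul _ _, hecov]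
  rw [hint]
  -- finishing matrix algebra
  have hsum : (∑ k, ∑ l, M k l * S k l) = (M * S).trace := by
    rw [Matrix.trace]
    refine Finset.sum_congr rfl fun k _ => ?_
    rw [Matrix.diag_apply, Matrix.mul_apply]
    refine Finset.sum_congr rfl fun l _ => ?_
    have : S l k = S k l := by conv_lhs => rw [← hSsymm, transpose_apply]
    rw [this]
  rw [hsum]
  have hKt : Kᵀ = S⁻¹ * H * B := by
    rw [hK, transpose_mul, transpose_mul, transpose_transpose, hBsymm, hSinvsymm,
      Matrix.mul_assoc]
  have hBu : IsUnit B.det := hB.det_pos.ne'.isUnit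
  have hSu : IsUnit S.det := hSpd.det_pos.ne'.isUnit
  have hMS : M * S = S⁻¹ * (H * (B * Hᵀ)) := by
    rw [hM, hKt, hK]
    simp only [Matrix.mul_assoc]
    rw [nonsing_inv_mul S hSu, Matrix.mul_one, Matrix.mul_nonsing_inv_cancel_left B _ hBu]
  rw [hMS, hK, trace_mul_comm, trace_mul_comm (B * Hᵀ * S⁻¹) H]
  congr 1
  simp only [Matrix.mul_assoc]
end

section
/- Let B be an n×n real symmetric positive definite matrix, R an m×m real symmetric positive definite matrix, H an m×n real matrix, and K = B Hᵀ (H B Hᵀ + R)⁻¹ the Kalman gain. Let (Ω, 𝔽, ℙ) be a probability space and ε_b : Ω → ℝⁿ, ε_y : Ω → ℝᵐ random vectors such that all products among their components are integrable, each component has mean zero, ∫ (ε_b)_i (ε_b)_j dℙ = B_{ij}, ∫ (ε_y)_k (ε_y)_l dℙ = R_{kl}, and ∫ (ε_b)_i (ε_y)_k dℙ = 0. With x_b = x_t + ε_b, y = H x_t − ε_y, and analysis x_a = x_b + K(y − H x_b), the expected observation part of the cost satisfies ∫ (y − H x_a)ᵀ R⁻¹ (y − H x_a) dℙ = Tr(I_m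 − H K), i.e., E[2 J_o(x_a)] = Tr(I_m − H K). -/
open Matrix MeasureTheory

/-- Desroziers–Ivanov observation diagnosis: with optimal Kalman gain `K`,
`E[(y - H x_a)ᵀ R⁻¹ (y - H x_a)] = Tr(I - H K)`, i.e.
`E[2 J_o(x_a)] = Tr(I - H K)`. -/
theorem expected_observation_cost_eq_trace_ImHK {n m : ℕ} {Ω : Type*}
    [MeasurableSpace Ω] (ℙ : Measure Ω) [IsProbabilityMeasure ℙ]
    (B : Matrix (Fin n) (Fin n) ℝ) (R : Matrix (Fin m) (Fin m) ℝ)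
    (H : Matrix (Fin m) (Fin n) ℝ)
    (hB : B.PosDef) (hR : R.PosDef)
    (K : Matrix (Fin n) (Fin m) ℝ)
    (hK : K = B * Hᵀ * (H * B * Hᵀ + R)⁻¹)
    (xt : Fin n → ℝ)
    (εb : Ω → (Fin n → ℝ)) (εy : Ω → (Fin m → ℝ))
    (hbb : ∀ i j, Integrable (fun ω => εb ω i * εb ω j) ℙ)
    (hyy : ∀ k l, Integrable (fun ω => εy ω k * εy ω l) ℙ)
    (hby : ∀ i k, Integrable (fun ω => εb ω i * εy ω k) ℙ)
    (hmb : ∀ i, ∫ ω, εb ω i ∂ℙ = 0)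
    (hmy : ∀ k, ∫ ω, εy ω k ∂ℙ = 0)
    (hBcov : ∀ i j, ∫ ω, εb ω i * εb ω j ∂ℙ = B i j)
    (hRcov : ∀ k l, ∫ ω, εy ω k * εy ω l ∂ℙ = R k l)
    (hcross : ∀ i k, ∫ ω, εb ω i * εy ω k ∂ℙ = 0)
    (xb : Ω → (Fin n → ℝ)) (hxb : ∀ ω, xb ω = xt + εb ω)
    (y : Ω → (Fin m → ℝ)) (hy : ∀ ω, y ω = H *ᵥ xt - εy ω)
    (xa : Ω → (Fin n → ℝ))
    (hxa : ∀ ω, xa ω = xb ω + K *ᵥ (y ω - H *ᵥ xb ω)) :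
    ∫ ω, (y ω - H *ᵥ xa ω) ⬝ᵥ R⁻¹ *ᵥ (y ω - H *ᵥ xa ω) ∂ℙ
      = ((1 : Matrix (Fin m) (Fin m) ℝ) - H * K).trace := by
  classical
  set S : Matrix (Fin m) (Fin m) ℝ := H * B * Hᵀ + R with hSdef
  have hSsymm : Sᵀ = S := by
    have hBs : Bᵀ = B := hB.isHermitian.eq
    have hRs : Rᵀ = R := hR.isHermitian.eq
    simp [hSdef, transpose_add, transpose_mul, hBs, hRs, Matrix.mul_assoc]
  have hSpd : S.PosDef := by
    have h1 : (H * B * Hᵀ).PosSemidef := by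
      have := hB.posSemidef.mul_mul_conjTranspose_same H
      simpa using this
    exact Matrix.PosDef.posSemidef_add h1 hR
  set M : Matrix (Fin m) (Fin m) ℝ := 1 - H * K with hMdef
  have hMS : M * S = R := by
    have hKS : K * S = B * Hᵀ := by
      rw [hK, Matrix.mul_assoc, Matrix.nonsing_inv_mul _ (isUnit_iff_isUnit_det _ |>.1 hSpd.isUnit),
        Matrix.mul_one]
    have : M * S = S - H * (K * S) := by
      rw [hMdef, Matrix.sub_mul, Matrix.one_mul, Matrix.mul_assoc]
    rw [this, hKS, hSdef, ← Matrix.mul_assoc]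
    abel
  set A : Matrix (Fin m) (Fin m) ℝ := Mᵀ * R⁻¹ * M with hAdef
  have hAS : (A * S).trace = M.trace := by
    have : A * S = Mᵀ := by
      rw [hAdef, Matrix.mul_assoc, hMS, Matrix.mul_assoc,
        Matrix.nonsing_inv_mul _ (isUnit_iff_isUnit_det _ |>.1 hR.isUnit), Matrix.mul_one]
    rw [this, trace_transpose]
  -- the innovation
  set e : Ω → Fin m → ℝ := fun ω => εy ω + H *ᵥ εb ω with hedef
  -- expansion of the product of components of e
  have hexp : ∀ k l, (fun ω => e ω k * e ω l)
      = fun ω => εy ω k * εy ω l + (∑ j, H l j * (εb ω j * εy ω k))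
          + (∑ i, H k i * (εb ω i * εy ω l))
          + ∑ i, ∑ j, H k i * H l j * (εb ω i * εb ω j) := by
    intro k l
    funext ω
    simp only [hedef, Pi.add_apply, mulVec, dotProduct]
    set a := εy ω k
    set b := εy ω l
    have e1 : a * (∑ j, H l j * εb ω j) = ∑ j, H l j * (εb ω j * a) := by
      rw [Finset.mul_sum]; exact Finset.sum_congr rfl fun j _ => by ring
    have e2 : (∑ i, H k i * εb ω i) * b = ∑ i, H k i * (εb ω i * b) := by
      rw [Finset.sum_mul]; exact Finset.sum_congr rfl fun i _ => by ring
    have e3 : (∑ i, H k i * εb ω i) * (∑ j, H l j * εb ω j)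
        = ∑ i, ∑ j, H k i * H l j * (εb ω i * εb ω j) := by
      rw [Finset.sum_mul_sum]
      exact Finset.sum_congr rfl fun i _ => Finset.sum_congr rfl fun j _ => by ring
    calc (a + ∑ j, H k j * εb ω j) * (b + ∑ j, H l j * εb ω j)
        = a * b + a * (∑ j, H l j * εb ω j) + (∑ i, H k i * εb ω i) * b
          + (∑ i, H k i * εb ω i) * (∑ j, H l j * εb ω j) := by ring
      _ = _ := by rw [e1, e2, e3]
  -- integrability of products
  have heint : ∀ k l, Integrable (fun ω => e ω k * e ω l) ℙ := by
    intro k l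
    rw [hexp]
    exact (((hyy k l).add (integrable_finset_sum _ fun j _ => (hby j k).const_mul _)).add
      (integrable_finset_sum _ fun i _ => (hby i l).const_mul _)).add
      (integrable_finset_sum _ fun i _ => integrable_finset_sum _ fun j _ =>
        (hbb i j).const_mul _)
  -- second moments of e
  have heS : ∀ k l, ∫ ω, e ω k * e ω l ∂ℙ = S k l := by
    intro k l
    rw [hexp]
    have I1 : Integrable (fun ω => εy ω k * εy ω l) ℙ := hyy k l
    have I2 : Integrable (fun ω => ∑ j, H l j * (εb ω j * εy ω k)) ℙ :=
      integrable_finset_sum _ fun j _ => (hby j k).const_mul (H l j)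
    have I3 : Integrable (fun ω => ∑ i, H k i * (εb ω i * εy ω l)) ℙ :=
      integrable_finset_sum _ fun i _ => (hby i l).const_mul (H k i)
    have I4 : Integrable (fun ω => ∑ i, ∑ j, H k i * H l j * (εb ω i * εb ω j)) ℙ :=
      integrable_finset_sum _ fun i _ => integrable_finset_sum _ fun j _ =>
        (hbb i j).const_mul (H k i * H l j)
    have I12 : Integrable (fun ω => εy ω k * εy ω l
        + ∑ j, H l j * (εb ω j * εy ω k)) ℙ := I1.add I2
    have I123 : Integrable (fun ω => εy ω k * εy ω l
        + ∑ j, H l j * (εb ω j * εy ω k)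
        + ∑ i, H k i * (εb ω i * εy ω l)) ℙ := I12.add I3
    rw [integral_add I123 I4, integral_add I12 I3,
      integral_add I1 I2,
      integral_finset_sum _ (fun j _ => (hby j k).const_mul (H l j)),
      integral_finset_sum _ (fun i _ => (hby i l).const_mul (H k i)),
      integral_finset_sum _ (fun i _ => integrable_finset_sum _ fun j _ =>
        (hbb i j).const_mul (H k i * H l j))]
    simp only [integral_const_mul, hcross, mul_zero, Finset.sum_const_zero,
      integral_finset_sum _ (fun j _ => (hbb _ j).const_mul _), hRcov, hBcov,
      add_zero]
    have : ∑ i, ∑ j, H k i * H l j * B i j = (H * B * Hᵀ) k l := by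
      simp only [Matrix.mul_apply, transpose_apply, Finset.sum_mul]
      rw [Finset.sum_comm]
      exact Finset.sum_congr rfl fun j _ => Finset.sum_congr rfl fun i _ => by ring
    rw [this]
    simp [hSdef, Matrix.add_apply, add_comm]
  -- rewrite integrand
  have hint_eq : ∀ ω, (y ω - H *ᵥ xa ω) ⬝ᵥ R⁻¹ *ᵥ (y ω - H *ᵥ xa ω)
      = ∑ k, ∑ l, A k l * (e ω k * e ω l) := by
    intro ω
    have hd : y ω - H *ᵥ xa ω = M *ᵥ (-(e ω)) := by
      have h1 : y ω - H *ᵥ xb ω = -(e ω) := by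
        simp [hy, hxb, hedef, Matrix.mulVec_add, sub_eq_add_neg]
        abel
      rw [hxa, Matrix.mulVec_add, Matrix.mulVec_mulVec, hMdef, Matrix.sub_mulVec,
        Matrix.one_mulVec, ← h1]
      abel
    rw [hd]
    have : (M *ᵥ -e ω) ⬝ᵥ R⁻¹ *ᵥ (M *ᵥ -e ω) = e ω ⬝ᵥ A *ᵥ e ω := by
      rw [Matrix.mulVec_neg, Matrix.mulVec_neg, neg_dotProduct,
        dotProduct_neg, neg_neg, hAdef,
        ← Matrix.mulVec_mulVec, ← Matrix.mulVec_mulVec,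
        Matrix.dotProduct_mulVec (e ω) Mᵀ, Matrix.vecMul_transpose]
    rw [this]
    simp only [dotProduct, mulVec, Finset.mul_sum]
    exact Finset.sum_congr rfl fun k _ => Finset.sum_congr rfl fun l _ => by ring
  calc ∫ ω, (y ω - H *ᵥ xa ω) ⬝ᵥ R⁻¹ *ᵥ (y ω - H *ᵥ xa ω) ∂ℙ
      = ∫ ω, ∑ k, ∑ l, A k l * (e ω k * e ω l) ∂ℙ :=
        integral_congr_ae (Filter.Eventually.of_forall hint_eq)
    _ = ∑ k, ∑ l, A k l * S k l := by
        rw [integral_finset_sum _ (fun k _ => integrable_finset_sum _ fun l _ =>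
          (heint k l).const_mul (A k l))]
        refine Finset.sum_congr rfl fun k _ => ?_
        rw [integral_finset_sum _ (fun l _ => (heint k l).const_mul (A k l))]
        exact Finset.sum_congr rfl fun l _ => by rw [integral_const_mul, heS]
    _ = (A * S).trace := by
        simp only [Matrix.trace, Matrix.diag, Matrix.mul_apply]
        refine Finset.sum_congr rfl fun k _ => Finset.sum_congr rfl fun l _ => ?_
        have h := congrFun (congrFun hSsymm l) k
        have : S l k = S k l := by simpa [Matrix.transpose_apply] using h.symm
        rw [this]
    _ = M.trace := hAS
    _ = ((1 : Matrix (Fin m) (Fin m) ℝ) - H * K).trace := by rw [hMdef]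
end

section
/- Let B be an n×n real symmetric positive definite matrix, R an m×m real symmetric positive definite matrix, H an m×n real matrix, and K = B Hᵀ (H B Hᵀ + R)⁻¹ the Kalman gain. Under the same second-moment hypotheses on the prior errors ε_b and ε_y (centered, mutually uncorrelated, entrywise covariances B and R, all component products integrable), with x_b = x_t + ε_b, y = H x_t − ε_y, and x_a = x_b + K(y − H x_b), the expected total 3D-Var cost at the analysis equals half the number of observations: ∫ J(x_a) dℙ = m/2, where J(x) = ½ (x − x_b)ᵀ B⁻¹ (x − x_b) + ½ (y − H x)ᵀ R⁻¹ (y − H x). -/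
open Matrix MeasureTheory

lemma quad_mulVec' {p q : Type*} [Fintype p] [Fintype q]
    (A : Matrix p q ℝ) (M : Matrix p p ℝ) (v : q → ℝ) :
    (A *ᵥ v) ⬝ᵥ M *ᵥ (A *ᵥ v) = v ⬝ᵥ (Aᵀ * M * A) *ᵥ v := by
  rw [← mulVec_mulVec, ← mulVec_mulVec, dotProduct_mulVec v, vecMul_transpose]

/-- With optimal Kalman gain and exact error covariances, the expected total
3D-Var cost at the analysis equals half the number of observations:
`E[J(x_a)] = m / 2`. -/
theorem expected_total_cost_eq_half_obs_dim {n m : ℕ} {Ω : Type*}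
    [MeasurableSpace Ω] (ℙ : Measure Ω) [IsProbabilityMeasure ℙ]
    (B : Matrix (Fin n) (Fin n) ℝ) (R : Matrix (Fin m) (Fin m) ℝ)
    (H : Matrix (Fin m) (Fin n) ℝ)
    (hB : B.PosDef) (hR : R.PosDef)
    (K : Matrix (Fin n) (Fin m) ℝ)
    (hK : K = B * Hᵀ * (H * B * Hᵀ + R)⁻¹)
    (xt : Fin n → ℝ)
    (εb : Ω → (Fin n → ℝ)) (εy : Ω → (Fin m → ℝ))
    (hbb : ∀ i j, Integrable (fun ω => εb ω i * εb ω j) ℙ)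
    (hyy : ∀ k l, Integrable (fun ω => εy ω k * εy ω l) ℙ)
    (hby : ∀ i k, Integrable (fun ω => εb ω i * εy ω k) ℙ)
    (hmb : ∀ i, ∫ ω, εb ω i ∂ℙ = 0)
    (hmy : ∀ k, ∫ ω, εy ω k ∂ℙ = 0)
    (hBcov : ∀ i j, ∫ ω, εb ω i * εb ω j ∂ℙ = B i j)
    (hRcov : ∀ k l, ∫ ω, εy ω k * εy ω l ∂ℙ = R k l)
    (hcross : ∀ i k, ∫ ω, εb ω i * εy ω k ∂ℙ = 0)
    (xb : Ω → (Fin n → ℝ)) (hxb : ∀ ω, xb ω = xt + εb ω)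
    (y : Ω → (Fin m → ℝ)) (hy : ∀ ω, y ω = H *ᵥ xt - εy ω)
    (xa : Ω → (Fin n → ℝ))
    (hxa : ∀ ω, xa ω = xb ω + K *ᵥ (y ω - H *ᵥ xb ω)) :
    ∫ ω, ((1 / 2 : ℝ) * ((xa ω - xb ω) ⬝ᵥ B⁻¹ *ᵥ (xa ω - xb ω))
        + (1 / 2 : ℝ) * ((y ω - H *ᵥ xa ω) ⬝ᵥ R⁻¹ *ᵥ (y ω - H *ᵥ xa ω))) ∂ℙ
      = (m : ℝ) / 2 := by
  classical
  set S := H * B * Hᵀ + R with hSdef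
  have hBt : Bᵀ = B := by
    rw [← conjTranspose_eq_transpose_of_trivial]; exact hB.isHermitian.eq
  have hRt : Rᵀ = R := by
    rw [← conjTranspose_eq_transpose_of_trivial]; exact hR.isHermitian.eq
  have hHBH : (H * B * Hᵀ).PosSemidef := by
    have := hB.posSemidef.mul_mul_conjTranspose_same H
    rwa [conjTranspose_eq_transpose_of_trivial] at this
  have hS : S.PosDef := Matrix.PosDef.posSemidef_add hHBH hR
  have hSt : Sᵀ = S := by
    rw [hSdef, transpose_add, hRt, transpose_mul, transpose_mul,
      transpose_transpose, hBt, Matrix.mul_assoc]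
  have hBdet : IsUnit B.det := isUnit_iff_ne_zero.mpr hB.det_pos.ne'
  have hRdet : IsUnit R.det := isUnit_iff_ne_zero.mpr hR.det_pos.ne'
  have hSdet : IsUnit S.det := isUnit_iff_ne_zero.mpr hS.det_pos.ne'
  have hSS : S * S⁻¹ = 1 := mul_nonsing_inv _ hSdet
  have hS'S : S⁻¹ * S = 1 := nonsing_inv_mul _ hSdet
  have hSit : S⁻¹ᵀ = S⁻¹ := by rw [transpose_nonsing_inv, hSt]
  have hK' : K = B * Hᵀ * S⁻¹ := hK
  have hKt : Kᵀ = S⁻¹ * (H * B) := by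
    rw [hK', transpose_mul, transpose_mul, transpose_transpose, hBt, hSit]
  have hIHK : (1 : Matrix (Fin m) (Fin m) ℝ) - H * K = R * S⁻¹ := by
    have h1 : H * K = H * B * Hᵀ * S⁻¹ := by
      rw [hK', ← Matrix.mul_assoc, ← Matrix.mul_assoc]
    rw [h1, ← hSS, ← Matrix.sub_mul, hSdef, add_sub_cancel_left]
  have hM : Kᵀ * B⁻¹ * K + ((1 : Matrix (Fin m) (Fin m) ℝ) - H * K)ᵀ * R⁻¹ *
      ((1 : Matrix (Fin m) (Fin m) ℝ) - H * K) = S⁻¹ := by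
    have h1 : Kᵀ * B⁻¹ * K = S⁻¹ * (H * B * Hᵀ) * S⁻¹ := by
      rw [hKt, hK']
      simp only [Matrix.mul_assoc]
      rw [Matrix.nonsing_inv_mul_cancel_left _ _ hBdet]
    have hIHKt : ((1 : Matrix (Fin m) (Fin m) ℝ) - H * K)ᵀ = S⁻¹ * R := by
      rw [hIHK, transpose_mul, hRt, hSit]
    have h2 : ((1 : Matrix (Fin m) (Fin m) ℝ) - H * K)ᵀ * R⁻¹ *
        ((1 : Matrix (Fin m) (Fin m) ℝ) - H * K) = S⁻¹ * R * S⁻¹ := by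
      rw [hIHKt, hIHK]
      simp only [Matrix.mul_assoc]
      rw [Matrix.nonsing_inv_mul_cancel_left _ _ hRdet]
    rw [h1, h2, ← Matrix.add_mul, ← Matrix.mul_add, ← hSdef, hS'S, Matrix.one_mul]
  -- the innovation-type vector
  set d : Ω → (Fin m → ℝ) := fun ω => εy ω + H *ᵥ εb ω with hd
  have hpt : ∀ ω, ((1 / 2 : ℝ) * ((xa ω - xb ω) ⬝ᵥ B⁻¹ *ᵥ (xa ω - xb ω))
      + (1 / 2 : ℝ) * ((y ω - H *ᵥ xa ω) ⬝ᵥ R⁻¹ *ᵥ (y ω - H *ᵥ xa ω)))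
      = (1 / 2 : ℝ) * (d ω ⬝ᵥ S⁻¹ *ᵥ d ω) := by
    intro ω
    have hyd : y ω - H *ᵥ xb ω = -(d ω) := by
      simp only [hy, hxb, hd, mulVec_add]
      abel
    have h1 : xa ω - xb ω = K *ᵥ (-(d ω)) := by
      rw [hxa ω, hyd]; abel
    have h2 : y ω - H *ᵥ xa ω = ((1 : Matrix (Fin m) (Fin m) ℝ) - H * K) *ᵥ (-(d ω)) := by
      rw [← hyd, hxa ω, mulVec_add, mulVec_mulVec, Matrix.sub_mulVec, Matrix.one_mulVec]
      abel
    rw [h1, h2]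
    simp only [mulVec_neg, dotProduct_neg, neg_dotProduct, neg_neg]
    rw [quad_mulVec', quad_mulVec', ← mul_add, ← dotProduct_add, ← add_mulVec, hM]
  have hdk : ∀ ω k, d ω k = εy ω k + ∑ i, H k i * εb ω i := by
    intro ω k; simp [hd, mulVec, dotProduct]
  -- integrability of the products of innovation components
  have hint : ∀ k l : Fin m, Integrable (fun ω => d ω k * d ω l) ℙ := by
    intro k l
    have hrepr : (fun ω => d ω k * d ω l) = fun ω =>
        (εy ω k * εy ω l + ∑ i, εy ω k * (H l i * εb ω i))
        + ((∑ i, H k i * εb ω i * εy ω l)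
          + ∑ i, ∑ j, H k i * εb ω i * (H l j * εb ω j)) := by
      funext ω
      rw [hdk ω k, hdk ω l]
      simp only [add_mul, mul_add, Finset.sum_mul, Finset.mul_sum]
      rw [Finset.sum_add_distrib, Finset.sum_comm]
      ring
    rw [hrepr]
    refine Integrable.add (Integrable.add (hyy k l) ?_) (Integrable.add ?_ ?_)
    · refine integrable_finset_sum _ fun i _ => ?_
      have : (fun ω => εy ω k * (H l i * εb ω i))
          = fun ω => H l i * (εb ω i * εy ω k) := by funext ω; ring
      rw [this]; exact (hby i k).const_mul _
    · refine integrable_finset_sum _ fun i _ => ?_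
      have : (fun ω => H k i * εb ω i * εy ω l)
          = fun ω => H k i * (εb ω i * εy ω l) := by funext ω; ring
      rw [this]; exact (hby i l).const_mul _
    · refine integrable_finset_sum _ fun i _ => ?_
      refine integrable_finset_sum _ fun j _ => ?_
      have : (fun ω => H k i * εb ω i * (H l j * εb ω j))
          = fun ω => (H k i * H l j) * (εb ω i * εb ω j) := by funext ω; ring
      rw [this]; exact (hbb i j).const_mul _
  -- second moments of the innovation components
  have hSval : ∀ k l : Fin m, ∫ ω, d ω k * d ω l ∂ℙ = S k l := by
    intro k l
    have hrepr : (fun ω => d ω k * d ω l) = fun ω =>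
        (εy ω k * εy ω l + ∑ i, εy ω k * (H l i * εb ω i))
        + ((∑ i, H k i * εb ω i * εy ω l)
          + ∑ i, ∑ j, H k i * εb ω i * (H l j * εb ω j)) := by
      funext ω
      rw [hdk ω k, hdk ω l]
      simp only [add_mul, mul_add, Finset.sum_mul, Finset.mul_sum]
      rw [Finset.sum_add_distrib, Finset.sum_comm]
      ring
    have i2 : Integrable (fun ω => ∑ i, εy ω k * (H l i * εb ω i)) ℙ := by
      refine integrable_finset_sum _ fun i _ => ?_
      have : (fun ω => εy ω k * (H l i * εb ω i))
          = fun ω => H l i * (εb ω i * εy ω k) := by funext ω; ring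
      rw [this]; exact (hby i k).const_mul _
    have i3 : Integrable (fun ω => ∑ i, H k i * εb ω i * εy ω l) ℙ := by
      refine integrable_finset_sum _ fun i _ => ?_
      have : (fun ω => H k i * εb ω i * εy ω l)
          = fun ω => H k i * (εb ω i * εy ω l) := by funext ω; ring
      rw [this]; exact (hby i l).const_mul _
    have i4 : Integrable (fun ω => ∑ i, ∑ j, H k i * εb ω i * (H l j * εb ω j)) ℙ := by
      refine integrable_finset_sum _ fun i _ => ?_
      refine integrable_finset_sum _ fun j _ => ?_
      have : (fun ω => H k i * εb ω i * (H l j * εb ω j))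
          = fun ω => (H k i * H l j) * (εb ω i * εb ω j) := by funext ω; ring
      rw [this]; exact (hbb i j).const_mul _
    have v2 : ∫ ω, (∑ i, εy ω k * (H l i * εb ω i)) ∂ℙ = 0 := by
      rw [integral_finset_sum _ fun i _ => by
        have : (fun ω => εy ω k * (H l i * εb ω i))
            = fun ω => H l i * (εb ω i * εy ω k) := by funext ω; ring
        rw [this]; exact (hby i k).const_mul _]
      refine Finset.sum_eq_zero fun i _ => ?_
      have : (fun ω => εy ω k * (H l i * εb ω i))
          = fun ω => H l i * (εb ω i * εy ω k) := by funext ω; ring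
      rw [this, integral_const_mul, hcross i k, mul_zero]
    have v3 : ∫ ω, (∑ i, H k i * εb ω i * εy ω l) ∂ℙ = 0 := by
      rw [integral_finset_sum _ fun i _ => by
        have : (fun ω => H k i * εb ω i * εy ω l)
            = fun ω => H k i * (εb ω i * εy ω l) := by funext ω; ring
        rw [this]; exact (hby i l).const_mul _]
      refine Finset.sum_eq_zero fun i _ => ?_
      have : (fun ω => H k i * εb ω i * εy ω l)
          = fun ω => H k i * (εb ω i * εy ω l) := by funext ω; ring
      rw [this, integral_const_mul, hcross i l, mul_zero]
    have v4 : ∫ ω, (∑ i, ∑ j, H k i * εb ω i * (H l j * εb ω j)) ∂ℙ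
        = (H * B * Hᵀ) k l := by
      rw [integral_finset_sum _ fun i _ => by
        refine integrable_finset_sum _ fun j _ => ?_
        have : (fun ω => H k i * εb ω i * (H l j * εb ω j))
            = fun ω => (H k i * H l j) * (εb ω i * εb ω j) := by funext ω; ring
        rw [this]; exact (hbb i j).const_mul _]
      have : ∀ i : Fin n, ∫ ω, (∑ j, H k i * εb ω i * (H l j * εb ω j)) ∂ℙ
          = ∑ j, (H k i * H l j) * B i j := by
        intro i
        rw [integral_finset_sum _ fun j _ => by
          have : (fun ω => H k i * εb ω i * (H l j * εb ω j))
              = fun ω => (H k i * H l j) * (εb ω i * εb ω j) := by funext ω; ring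
          rw [this]; exact (hbb i j).const_mul _]
        refine Finset.sum_congr rfl fun j _ => ?_
        have : (fun ω => H k i * εb ω i * (H l j * εb ω j))
            = fun ω => (H k i * H l j) * (εb ω i * εb ω j) := by funext ω; ring
        rw [this, integral_const_mul, hBcov i j]
      simp only [this, Matrix.mul_apply, Matrix.transpose_apply]
      rw [Finset.sum_comm]
      refine Finset.sum_congr rfl fun j _ => ?_
      rw [Finset.sum_mul]
      refine Finset.sum_congr rfl fun i _ => ?_
      ring
    have i12 : Integrable (fun ω => εy ω k * εy ω l
        + ∑ i, εy ω k * (H l i * εb ω i)) ℙ := (hyy k l).add i2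
    have i34 : Integrable (fun ω => (∑ i, H k i * εb ω i * εy ω l)
        + ∑ i, ∑ j, H k i * εb ω i * (H l j * εb ω j)) ℙ := i3.add i4
    rw [hrepr]
    rw [integral_add i12 i34, integral_add (hyy k l) i2,
      integral_add i3 i4, hRcov k l, v2, v3, v4, hSdef]
    simp [Matrix.add_apply]
    ring
  -- expand the quadratic form entrywise
  have hexp : ∀ ω, d ω ⬝ᵥ S⁻¹ *ᵥ d ω = ∑ k, ∑ l, S⁻¹ k l * (d ω k * d ω l) := by
    intro ω
    simp only [dotProduct, mulVec, Finset.mul_sum]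
    exact Finset.sum_congr rfl fun k _ => Finset.sum_congr rfl fun l _ => by ring
  have key : ∫ ω, d ω ⬝ᵥ S⁻¹ *ᵥ d ω ∂ℙ = (m : ℝ) := by
    have h1 : ∫ ω, d ω ⬝ᵥ S⁻¹ *ᵥ d ω ∂ℙ
        = ∑ k, ∑ l, S⁻¹ k l * S k l := by
      simp only [hexp]
      refine (integral_finset_sum (f := fun k ω => ∑ l, S⁻¹ k l * (d ω k * d ω l)) _ fun k _ =>
        integrable_finset_sum _ fun l _ => (hint k l).const_mul _).trans ?_
      refine Finset.sum_congr rfl fun k _ => ?_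
      refine (integral_finset_sum (f := fun l ω => S⁻¹ k l * (d ω k * d ω l)) _
        fun l _ => (hint k l).const_mul _).trans ?_
      refine Finset.sum_congr rfl fun l _ => ?_
      rw [integral_const_mul, hSval k l]
    rw [h1]
    have h2 : ∑ k, ∑ l, S⁻¹ k l * S k l = ∑ k, ∑ l, S⁻¹ k l * S l k := by
      refine Finset.sum_congr rfl fun k _ => Finset.sum_congr rfl fun l _ => ?_
      congr 1
      conv_lhs => rw [← hSt]
      exact Matrix.transpose_apply S k l
    rw [h2]
    have h3 : ∑ k, ∑ l, S⁻¹ k l * S l k = ∑ k : Fin m, (S⁻¹ * S) k k := by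
      simp [Matrix.mul_apply]
    rw [h3, hS'S]
    simp [Matrix.one_apply]
  calc ∫ ω, ((1 / 2 : ℝ) * ((xa ω - xb ω) ⬝ᵥ B⁻¹ *ᵥ (xa ω - xb ω))
        + (1 / 2 : ℝ) * ((y ω - H *ᵥ xa ω) ⬝ᵥ R⁻¹ *ᵥ (y ω - H *ᵥ xa ω))) ∂ℙ
      = ∫ ω, (1 / 2 : ℝ) * (d ω ⬝ᵥ S⁻¹ *ᵥ d ω) ∂ℙ := by simp only [hpt]
    _ = (1 / 2 : ℝ) * ∫ ω, d ω ⬝ᵥ S⁻¹ *ᵥ d ω ∂ℙ := integral_const_mul _ _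
    _ = (m : ℝ) / 2 := by rw [key]; ring
end

section
/- Let B be an n×n real symmetric positive semidefinite matrix, R an m×m real symmetric positive definite matrix, H an m×n real matrix, and K = B Hᵀ (H B Hᵀ + R)⁻¹ the Kalman gain. Then both matrices B Hᵀ (H B Hᵀ + R)⁻¹ H B and (I_n − K H) B = B − B Hᵀ (H B Hᵀ + R)⁻¹ H B are symmetric positive semidefinite. In particular, the analysis error covariance (I_n − K H) B is dominated by the background covariance B in the Loewner order. -/
open Matrix

/-- Both the update term `B Hᵀ (H B Hᵀ + R)⁻¹ H B` and the analysis error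
covariance `(I - K H) B = B - B Hᵀ (H B Hᵀ + R)⁻¹ H B` are symmetric positive
semidefinite; in particular the analysis covariance is dominated by `B` in the
Loewner order. -/
theorem analysis_covariance_posSemidef {n m : ℕ}
    (B : Matrix (Fin n) (Fin n) ℝ) (R : Matrix (Fin m) (Fin m) ℝ)
    (H : Matrix (Fin m) (Fin n) ℝ)
    (hB : B.PosSemidef) (hR : R.PosDef)
    (K : Matrix (Fin n) (Fin m) ℝ)
    (hK : K = B * Hᵀ * (H * B * Hᵀ + R)⁻¹) :
    (B * Hᵀ * (H * B * Hᵀ + R)⁻¹ * H * B).PosSemidef ∧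
    ((1 : Matrix (Fin n) (Fin n) ℝ) - K * H) * B
        = B - B * Hᵀ * (H * B * Hᵀ + R)⁻¹ * H * B ∧
    (((1 : Matrix (Fin n) (Fin n) ℝ) - K * H) * B).PosSemidef := by
  set S := H * B * Hᵀ + R with hSdef
  have hHBHt : (H * B * Hᵀ).PosSemidef := by
    simpa using hB.mul_mul_conjTranspose_same H
  have hS : S.PosDef := Matrix.PosDef.posSemidef_add hHBHt hR
  have hSinv : S⁻¹.PosDef := hS.inv
  have hBt : Bᵀ = B := hB.isHermitian.eq
  -- first part
  have h1 : (B * Hᵀ * S⁻¹ * H * B).PosSemidef := by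
    have := hSinv.posSemidef.conjTranspose_mul_mul_same (H * B)
    simpa [Matrix.transpose_mul, hBt, Matrix.mul_assoc] using this
  refine ⟨h1, ?_, ?_⟩
  · rw [hK]
    simp only [Matrix.sub_mul, Matrix.one_mul, Matrix.mul_assoc]
  · -- (1 - K*H) * B = (1 - K*H) * B * (1 - K*H)ᵀ + K * R * Kᵀ
    have hKS : K * S = B * Hᵀ := by
      rw [hK, Matrix.mul_assoc, Matrix.nonsing_inv_mul _ ((Matrix.isUnit_iff_isUnit_det _).1 hS.isUnit), Matrix.mul_one]
    have key : ((1 : Matrix (Fin n) (Fin n) ℝ) - K * H) * B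
        = ((1 : Matrix (Fin n) (Fin n) ℝ) - K * H) * B
            * ((1 : Matrix (Fin n) (Fin n) ℝ) - K * H)ᵀ + K * R * Kᵀ := by
      have expand : ((1 : Matrix (Fin n) (Fin n) ℝ) - K * H) * B
            * ((1 : Matrix (Fin n) (Fin n) ℝ) - K * H)ᵀ + K * R * Kᵀ
          = B - K * H * B - B * Hᵀ * Kᵀ + K * (H * B * Hᵀ) * Kᵀ + K * R * Kᵀ := by
        simp only [Matrix.transpose_sub, Matrix.transpose_one, Matrix.transpose_mul, hBt,
          Matrix.sub_mul, Matrix.mul_sub, Matrix.one_mul, Matrix.mul_one, Matrix.mul_assoc]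
        abel
      rw [expand]
      have : K * (H * B * Hᵀ) * Kᵀ + K * R * Kᵀ = K * S * Kᵀ := by
        rw [hSdef, Matrix.mul_add, Matrix.add_mul]
      rw [add_assoc, this, hKS]
      simp only [Matrix.sub_mul, Matrix.one_mul, Matrix.mul_assoc]
      abel
    rw [key]
    have hs1 : (((1 : Matrix (Fin n) (Fin n) ℝ) - K * H) * B
        * ((1 : Matrix (Fin n) (Fin n) ℝ) - K * H)ᵀ).PosSemidef := by
      have := hB.mul_mul_conjTranspose_same ((1 : Matrix (Fin n) (Fin n) ℝ) - K * H)
      simpa [Matrix.mul_assoc] using this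
    have hs2 : (K * R * Kᵀ).PosSemidef := by
      simpa [Matrix.mul_assoc] using hR.posSemidef.mul_mul_conjTranspose_same K
    exact hs1.add hs2
end
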